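/- Let δ be a real constant, let D ⊆ ℝ × (0,∞) be an open set, and let x* : D → ℝ be sufficiently smooth (C³ in y, C¹ in t, with jointly continuous derivatives) satisfying the Burgers equation ∂x*/∂t = ∂²x*/∂y² − 2δ·x*·∂x*/∂y on D and ∂x*/∂y ≠ 0 on D. Let Ψ : ℝ × (0,∞) → ℝ be twice continuously differentiable in its first variable and once in its second, and suppose Ψ(x*(y,t), t) = 1/(∂x*/∂y (y,t)) for all (y,t) ∈ D, where for each t the map y ↦ x*(y,t) is an open embedding of the t-slice of D. Then at every point (x*(y,t), t) with (y,t) ∈ D, Ψ satisfies the nonlinear evolution equation with source ∂Ψ/∂t = ∂/∂x ( (∂Ψ/∂x)/Ψ² ) + 2δ. -/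

import Mathlib

open Filter

private lemma stmt16_pd1 (H : ℝ × ℝ → ℝ) (z τ : ℝ) (h : DifferentiableAt ℝ H (z, τ)) :
    HasDerivAt (fun z' => H (z', τ)) (fderiv ℝ H (z, τ) (1, 0)) z := by
  have := h.hasFDerivAt.comp_hasDerivAt z ((hasDerivAt_id z).prodMk (hasDerivAt_const z τ))
  simp at this; exact this

private lemma stmt16_pd2 (H : ℝ × ℝ → ℝ) (z τ : ℝ) (h : DifferentiableAt ℝ H (z, τ)) :
    HasDerivAt (fun τ' => H (z, τ')) (fderiv ℝ H (z, τ) (0, 1)) τ := by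
  have := h.hasFDerivAt.comp_hasDerivAt τ ((hasDerivAt_const τ z).prodMk (hasDerivAt_id τ))
  exact this

private lemma stmt16_clm_eval (L : (ℝ × ℝ) →L[ℝ] ℝ) (p : ℝ × ℝ) :
    L p = p.1 * L (1, 0) + p.2 * L (0, 1) := by
  have hp : p = p.1 • ((1:ℝ), (0:ℝ)) + p.2 • ((0:ℝ), (1:ℝ)) := by
    simp [Prod.ext_iff]
  rw [hp, map_add, map_smul, map_smul]
  simp [smul_eq_mul]

private noncomputable def stmt16_shear (u c : ℝ) (hu : u ≠ 0) : (ℝ × ℝ) ≃L[ℝ] (ℝ × ℝ) where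
  toFun p := (u * p.1 + c * p.2, p.2)
  invFun p := ((p.1 - c * p.2) / u, p.2)
  map_add' p q := by simp [Prod.ext_iff]; ring
  map_smul' m p := by simp [Prod.ext_iff, smul_eq_mul]; ring
  left_inv p := by field_simp; simp [Prod.ext_iff]; field_simp
  right_inv p := by simp [Prod.ext_iff]; field_simp; ring
  continuous_toFun := by continuity
  continuous_invFun := by continuity

private lemma stmt16_shear_symm (u c : ℝ) (hu : u ≠ 0) (p : ℝ × ℝ) :
    (stmt16_shear u c hu).symm p = ((p.1 - c * p.2) / u, p.2) := rfl

private lemma stmt16_shear_apply (u c : ℝ) (hu : u ≠ 0) (p : ℝ × ℝ) :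
    stmt16_shear u c hu p = (u * p.1 + c * p.2, p.2) := rfl

/-- Let `δ ∈ ℝ`, `D ⊆ ℝ × (0,∞)` open, and `x*` sufficiently smooth (jointly
`C³`) on `D`, satisfying the Burgers equation `∂x*/∂t = ∂²x*/∂y² − 2δ x* ∂x*/∂y`
on `D` with `∂x*/∂y ≠ 0` on `D`. Let `Ψ` be `C²` in its first variable and `C¹`
in its second, with `Ψ(x*(y,t), t) = 1/(∂x*/∂y (y,t))` on `D`, where for each `t`
the map `y ↦ x*(y,t)` is injective (an embedding) on the `t`-slice of `D`. Then
at every point `(x*(y,t), t)` with `(y,t) ∈ D`, `Ψ` satisfies the nonlinear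
evolution equation with source `∂Ψ/∂t = ∂/∂x ((∂Ψ/∂x)/Ψ²) + 2δ`. -/
theorem stmt16 (δ : ℝ) (D : Set (ℝ × ℝ))
    (hDopen : IsOpen D) (hDpos : ∀ p ∈ D, 0 < p.2)
    (xs : ℝ → ℝ → ℝ)
    (hxs_smooth : ContDiffOn ℝ 3 (fun p : ℝ × ℝ => xs p.1 p.2) D)
    (hburgers : ∀ y t : ℝ, (y, t) ∈ D →
      deriv (fun τ : ℝ => xs y τ) t =
        deriv (deriv (fun z : ℝ => xs z t)) y
          - 2 * δ * xs y t * deriv (fun z : ℝ => xs z t) y)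
    (hxs_y_ne : ∀ y t : ℝ, (y, t) ∈ D → deriv (fun z : ℝ => xs z t) y ≠ 0)
    (Ψ : ℝ → ℝ → ℝ)
    (hΨx : ∀ t : ℝ, 0 < t → ContDiff ℝ 2 (fun x : ℝ => Ψ x t))
    (hΨt : ∀ x : ℝ, ∀ t : ℝ, 0 < t → DifferentiableAt ℝ (fun τ : ℝ => Ψ x τ) t)
    (hrecip : ∀ y t : ℝ, (y, t) ∈ D →
      Ψ (xs y t) t = 1 / deriv (fun z : ℝ => xs z t) y)
    (hemb : ∀ t : ℝ, Set.InjOn (fun y : ℝ => xs y t) {y : ℝ | (y, t) ∈ D})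
    (hopenmap : ∀ t : ℝ, IsOpen ((fun y : ℝ => xs y t) '' {y : ℝ | (y, t) ∈ D})) :
    ∀ y t : ℝ, (y, t) ∈ D →
      deriv (fun τ : ℝ => Ψ (xs y t) τ) t =
        deriv (fun x : ℝ => deriv (fun x' : ℝ => Ψ x' t) x / (Ψ x t) ^ 2)
          (xs y t) + 2 * δ := by
  intro y t hyt
  have ht : 0 < t := hDpos (y, t) hyt
  set X : ℝ × ℝ → ℝ := fun p => xs p.1 p.2 with hXdef
  set U : ℝ × ℝ → ℝ := fun p => fderiv ℝ X p (1, 0) with hUdef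
  set Vt : ℝ × ℝ → ℝ := fun p => fderiv ℝ X p (0, 1) with hVdef
  set W : ℝ × ℝ → ℝ := fun p => fderiv ℝ U p (1, 0) with hWdef
  -- regularity
  have hX3 : ∀ z τ : ℝ, (z, τ) ∈ D → ContDiffAt ℝ 3 X (z, τ) :=
    fun z τ hp => hxs_smooth.contDiffAt (hDopen.mem_nhds hp)
  have hXd : ∀ z τ : ℝ, (z, τ) ∈ D → DifferentiableAt ℝ X (z, τ) :=
    fun z τ hp => (hX3 z τ hp).differentiableAt (by norm_num)
  have hfX2 : ∀ z τ : ℝ, (z, τ) ∈ D → ContDiffAt ℝ 2 (fderiv ℝ X) (z, τ) :=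
    fun z τ hp => (hX3 z τ hp).fderiv_right (by norm_num)
  have hU2 : ∀ z τ : ℝ, (z, τ) ∈ D → ContDiffAt ℝ 2 U (z, τ) :=
    fun z τ hp => (hfX2 z τ hp).clm_apply contDiffAt_const
  have hV2 : ∀ z τ : ℝ, (z, τ) ∈ D → ContDiffAt ℝ 2 Vt (z, τ) :=
    fun z τ hp => (hfX2 z τ hp).clm_apply contDiffAt_const
  have hUd : ∀ z τ : ℝ, (z, τ) ∈ D → DifferentiableAt ℝ U (z, τ) :=
    fun z τ hp => (hU2 z τ hp).differentiableAt (by norm_num)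
  have hVd : ∀ z τ : ℝ, (z, τ) ∈ D → DifferentiableAt ℝ Vt (z, τ) :=
    fun z τ hp => (hV2 z τ hp).differentiableAt (by norm_num)
  have hWd : ∀ z τ : ℝ, (z, τ) ∈ D → DifferentiableAt ℝ W (z, τ) :=
    fun z τ hp =>
      (((hU2 z τ hp).fderiv_right (m := 1) (by norm_num)).clm_apply
        (contDiffAt_const (c := ((1:ℝ),(0:ℝ))))).differentiableAt one_ne_zero
  -- slice derivatives
  have hsliceU : ∀ z τ : ℝ, (z, τ) ∈ D → HasDerivAt (fun z' => xs z' τ) (U (z, τ)) z :=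
    fun z τ hp => stmt16_pd1 X z τ (hXd z τ hp)
  have hderiv_slice : ∀ z τ : ℝ, (z, τ) ∈ D → deriv (fun z' => xs z' τ) z = U (z, τ) :=
    fun z τ hp => (hsliceU z τ hp).deriv
  have hune : ∀ z τ : ℝ, (z, τ) ∈ D → U (z, τ) ≠ 0 := by
    intro z τ hp
    have h := hxs_y_ne z τ hp
    rwa [hderiv_slice z τ hp] at h
  -- eventual membership in the y-direction
  have hmem1 : ∀ z τ : ℝ, (z, τ) ∈ D → ∀ᶠ z' in nhds z, (z', τ) ∈ D := by
    intro z τ hp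
    have hc : ContinuousAt (fun z' : ℝ => (z', τ)) z :=
      (continuous_id.prodMk continuous_const).continuousAt
    exact hc.preimage_mem_nhds (hDopen.mem_nhds hp)
  -- second slice derivative
  have hderiv2_slice : ∀ z τ : ℝ, (z, τ) ∈ D →
      deriv (deriv (fun z' => xs z' τ)) z = W (z, τ) := by
    intro z τ hp
    have hev : deriv (fun z' => xs z' τ) =ᶠ[nhds z] fun z' => U (z', τ) := by
      filter_upwards [hmem1 z τ hp] with z' hz' using hderiv_slice z' τ hz'
    rw [hev.deriv_eq]
    exact (stmt16_pd1 U z τ (hUd z τ hp)).deriv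
  -- time slice derivative
  have hderiv_t : ∀ z τ : ℝ, (z, τ) ∈ D → deriv (fun τ' => xs z τ') τ = Vt (z, τ) :=
    fun z τ hp => (stmt16_pd2 X z τ (hXd z τ hp)).deriv
  -- Burgers in terms of U, Vt, W
  have hburg' : ∀ z τ : ℝ, (z, τ) ∈ D →
      Vt (z, τ) = W (z, τ) - 2 * δ * (xs z τ * U (z, τ)) := by
    intro z τ hp
    have h := hburgers z τ hp
    rw [hderiv_t z τ hp, hderiv2_slice z τ hp, hderiv_slice z τ hp] at h
    rw [h]; ring
  -- point values
  have h1 : U (y, t) ≠ 0 := hune y t hyt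
  -- step (B): mixed second derivative via symmetry
  have hsym := (hX3 y t hyt).isSymmSndFDerivAt (by norm_num)
  have hfXd : DifferentiableAt ℝ (fderiv ℝ X) (y, t) :=
    (hfX2 y t hyt).differentiableAt two_ne_zero
  have hUF : HasFDerivAt U
      ((ContinuousLinearMap.apply ℝ ℝ ((1:ℝ), (0:ℝ))).comp
        (fderiv ℝ (fderiv ℝ X) (y, t))) (y, t) :=
    (ContinuousLinearMap.apply ℝ ℝ ((1:ℝ), (0:ℝ))).hasFDerivAt.comp (y, t) hfXd.hasFDerivAt
  have hVF : HasFDerivAt Vt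
      ((ContinuousLinearMap.apply ℝ ℝ ((0:ℝ), (1:ℝ))).comp
        (fderiv ℝ (fderiv ℝ X) (y, t))) (y, t) :=
    (ContinuousLinearMap.apply ℝ ℝ ((0:ℝ), (1:ℝ))).hasFDerivAt.comp (y, t) hfXd.hasFDerivAt
  have hsymm_eq : fderiv ℝ U (y, t) (0, 1) = fderiv ℝ Vt (y, t) (1, 0) := by
    rw [hUF.fderiv, hVF.fderiv]
    simpa using hsym ((0:ℝ), (1:ℝ)) ((1:ℝ), (0:ℝ))
  have hVt_ev : (fun z => Vt (z, t)) =ᶠ[nhds y]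
      (fun z => W (z, t) - 2 * δ * (xs z t * U (z, t))) := by
    filter_upwards [hmem1 y t hyt] with z hz using hburg' z t hz
  have hB : fderiv ℝ U (y, t) (0, 1)
      = fderiv ℝ W (y, t) (1, 0)
        - 2 * δ * (U (y, t) * U (y, t) + xs y t * fderiv ℝ U (y, t) (1, 0)) := by
    have hd := (stmt16_pd1 W y t (hWd y t hyt)).sub
      (((hsliceU y t hyt).mul (stmt16_pd1 U y t (hUd y t hyt))).const_mul (2 * δ))
    have h2d : HasDerivAt (fun z => Vt (z, t))
        (fderiv ℝ W (y, t) (1, 0)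
          - 2 * δ * (U (y, t) * U (y, t) + xs y t * fderiv ℝ U (y, t) (1, 0))) y :=
      hd.congr_of_eventuallyEq hVt_ev
    rw [hsymm_eq, ← (stmt16_pd1 Vt y t (hVd y t hyt)).deriv, h2d.deriv]
  -- step (C): spatial derivative of the flux
  have hψ2 : ContDiff ℝ 2 (fun x : ℝ => Ψ x t) := hΨx t ht
  have hψd : Differentiable ℝ (fun x : ℝ => Ψ x t) := hψ2.differentiable (by norm_num)
  have hψ'1 : ContDiff ℝ 1 (deriv (fun x : ℝ => Ψ x t)) := by
    have h2 : ContDiff ℝ (1 + 1 : ℕ) (fun x : ℝ => Ψ x t) := by exact_mod_cast hψ2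
    exact (contDiff_succ_iff_deriv.mp (by exact_mod_cast h2)).2.2
  have hΨ0 : Ψ (xs y t) t = (U (y, t))⁻¹ := by
    rw [hrecip y t hyt, hderiv_slice y t hyt, one_div]
  have hΨ0ne : Ψ (xs y t) t ≠ 0 := by rw [hΨ0]; exact inv_ne_zero h1
  have hgdiff : DifferentiableAt ℝ
      (fun x : ℝ => deriv (fun x' : ℝ => Ψ x' t) x / (Ψ x t) ^ 2) (xs y t) := by
    exact ((hψ'1.differentiable one_ne_zero (xs y t)).div
      ((hψd (xs y t)).pow 2) (pow_ne_zero 2 hΨ0ne))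
  have hchain : HasDerivAt
      (fun z => deriv (fun x' : ℝ => Ψ x' t) (xs z t) / (Ψ (xs z t) t) ^ 2)
      (deriv (fun x : ℝ => deriv (fun x' : ℝ => Ψ x' t) x / (Ψ x t) ^ 2) (xs y t)
        * U (y, t)) y :=
    by have h := (hgdiff.hasDerivAt).comp y (hsliceU y t hyt); exact h
  -- pointwise value of deriv Ψ along the slice
  have hψ'fact : ∀ z : ℝ, (z, t) ∈ D →
      deriv (fun x' : ℝ => Ψ x' t) (xs z t)
        = -(W (z, t)) / U (z, t) ^ 3 := by
    intro z hz
    have hL : HasDerivAt (fun z' => Ψ (xs z' t) t)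
        (deriv (fun x' : ℝ => Ψ x' t) (xs z t) * U (z, t)) z :=
      by have h := ((hψd (xs z t)).hasDerivAt).comp z (hsliceU z t hz); exact h
    have hR : HasDerivAt (fun z' => (U (z', t))⁻¹)
        (-(fderiv ℝ U (z, t) (1, 0)) / U (z, t) ^ 2) z :=
      (stmt16_pd1 U z t (hUd z t hz)).inv (hune z t hz)
    have hev : (fun z' => Ψ (xs z' t) t) =ᶠ[nhds z] (fun z' => (U (z', t))⁻¹) := by
      filter_upwards [hmem1 z t hz] with z' hz'
      rw [hrecip z' t hz', hderiv_slice z' t hz', one_div]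
    have heq := (hL.congr_of_eventuallyEq hev.symm).unique hR
    have hu' := hune z t hz
    show deriv (fun x' : ℝ => Ψ x' t) (xs z t) = -(fderiv ℝ U (z, t) (1, 0)) / U (z, t) ^ 3
    rw [eq_div_iff (pow_ne_zero 3 hu')]
    field_simp at heq
    linear_combination heq
  have hev2 : (fun z => deriv (fun x' : ℝ => Ψ x' t) (xs z t) / (Ψ (xs z t) t) ^ 2)
      =ᶠ[nhds y] (fun z => -(W (z, t)) / U (z, t)) := by
    filter_upwards [hmem1 y t hyt] with z hz
    have hu' := hune z t hz
    rw [hψ'fact z hz, hrecip z t hz, hderiv_slice z t hz]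
    field_simp
  have hRd : HasDerivAt (fun z => -(W (z, t)) / U (z, t))
      ((-(fderiv ℝ W (y, t) (1, 0)) * U (y, t)
          - -(W (y, t)) * fderiv ℝ U (y, t) (1, 0)) / U (y, t) ^ 2) y :=
    ((stmt16_pd1 W y t (hWd y t hyt)).neg).div (stmt16_pd1 U y t (hUd y t hyt)) h1
  have hW_rfl : W (y, t) = fderiv ℝ U (y, t) (1, 0) := rfl
  have hC : deriv (fun x : ℝ => deriv (fun x' : ℝ => Ψ x' t) x / (Ψ x t) ^ 2) (xs y t)
        * U (y, t)
      = (-(fderiv ℝ W (y, t) (1, 0)) * U (y, t)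
          - -(fderiv ℝ U (y, t) (1, 0)) * fderiv ℝ U (y, t) (1, 0)) / U (y, t) ^ 2 := by
    have := (hchain.congr_of_eventuallyEq hev2.symm).unique hRd
    rw [← hW_rfl]
    exact this
  -- step (D): local inverse in time and time derivative
  set A := stmt16_shear (U (y, t)) (Vt (y, t)) h1 with hAdef
  set F : ℝ × ℝ → ℝ × ℝ := fun p => (X p, p.2) with hFdef
  have hXs : HasStrictFDerivAt X (fderiv ℝ X (y, t)) (y, t) :=
    (hX3 y t hyt).hasStrictFDerivAt (by norm_num)
  have hlin : ((fderiv ℝ X (y, t)).prod (ContinuousLinearMap.snd ℝ ℝ ℝ))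
      = (A : (ℝ × ℝ) →L[ℝ] (ℝ × ℝ)) := by
    apply ContinuousLinearMap.ext
    intro p
    have := stmt16_clm_eval (fderiv ℝ X (y, t)) p
    simp [hAdef, stmt16_shear_apply, ContinuousLinearMap.prod_apply, this]
    have hU' : U (y, t) = fderiv ℝ X (y, t) (1, 0) := rfl
    have hV' : Vt (y, t) = fderiv ℝ X (y, t) (0, 1) := rfl
    rw [hU', hV']
    ring
  have hFs : HasStrictFDerivAt F (A : (ℝ × ℝ) →L[ℝ] (ℝ × ℝ)) (y, t) := by
    have := hXs.prodMk (ContinuousLinearMap.snd ℝ ℝ ℝ).hasStrictFDerivAt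
    rwa [hlin] at this
  have hF0 : F (y, t) = (xs y t, t) := rfl
  set G := hFs.localInverse F A (y, t) with hGdef
  have hGat : G (xs y t, t) = (y, t) := by
    rw [← hF0]
    exact hFs.localInverse_apply_image
  have hGstrict : HasStrictFDerivAt G
      ((A.symm : (ℝ × ℝ) →L[ℝ] (ℝ × ℝ))) (xs y t, t) := by
    rw [← hF0]
    exact hFs.to_localInverse
  set ζ : ℝ → ℝ := fun τ => (G (xs y t, τ)).1 with hζdef
  have hζt : ζ t = y := by rw [hζdef]; simp [hGat]
  have hcurveG : HasDerivAt (fun τ => G (xs y t, τ)) (A.symm ((0:ℝ), (1:ℝ))) t :=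
    (hGstrict.hasFDerivAt).comp_hasDerivAt t
      ((hasDerivAt_const t (xs y t)).prodMk (hasDerivAt_id t))
  have hζderiv : HasDerivAt ζ ((A.symm ((0:ℝ), (1:ℝ))).1) t := by
    have := (ContinuousLinearMap.fst ℝ ℝ ℝ).hasFDerivAt.comp_hasDerivAt t hcurveG
    simp at this; exact this
  set zp : ℝ := (A.symm ((0:ℝ), (1:ℝ))).1 with hzpdef
  have hE : zp * U (y, t) + Vt (y, t) = 0 := by
    rw [hzpdef, hAdef, stmt16_shear_symm]
    field_simp
    ring
  -- eventual identity along the time fiber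
  have hGright := hFs.eventually_right_inverse
  have htend : Filter.Tendsto (fun τ : ℝ => ((xs y t : ℝ), τ)) (nhds t) (nhds (xs y t, t)) := by
    have : ContinuousAt (fun τ : ℝ => ((xs y t : ℝ), τ)) t :=
      (continuous_const.prodMk continuous_id).continuousAt
    exact this
  have h5 : ∀ᶠ τ in nhds t, F (G (xs y t, τ)) = (xs y t, τ) := by
    rw [hF0] at hGright
    exact htend.eventually hGright
  have hGcont : ContinuousAt (fun τ => G (xs y t, τ)) t :=
    hGstrict.continuousAt.comp htend
  have hmemD : ∀ᶠ τ in nhds t, G (xs y t, τ) ∈ D := by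
    have : G (xs y t, t) ∈ D := by rw [hGat]; exact hyt
    have h' : (fun τ => G (xs y t, τ)) t ∈ D := this
    exact hGcont.eventually_mem (hDopen.mem_nhds h')
  have hfiber : ∀ᶠ τ in nhds t, (ζ τ, τ) ∈ D ∧ xs (ζ τ) τ = xs y t := by
    filter_upwards [h5, hmemD] with τ h5τ hmτ
    have hsnd : (G (xs y t, τ)).2 = τ := congrArg Prod.snd h5τ
    have hpair : G (xs y t, τ) = (ζ τ, τ) := by
      rw [hζdef]; exact Prod.ext rfl hsnd
    constructor
    · rw [← hpair]; exact hmτ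
    · have hfst : X (G (xs y t, τ)) = xs y t := congrArg Prod.fst h5τ
      rw [hpair] at hfst
      exact hfst
  have hΨev : (fun τ => Ψ (xs y t) τ) =ᶠ[nhds t] (fun τ => (U (ζ τ, τ))⁻¹) := by
    filter_upwards [hfiber] with τ hτ
    rw [← hτ.2, hrecip (ζ τ) τ hτ.1, hderiv_slice (ζ τ) τ hτ.1, one_div]
  have hUcurve : HasDerivAt (fun τ => U (ζ τ, τ)) (fderiv ℝ U (y, t) (zp, 1)) t := by
    exact (hUd y t hyt).hasFDerivAt.comp_hasDerivAt_of_eq t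
      (hζderiv.prodMk (hasDerivAt_id t)) (by rw [hζt])
  have hUζt : U (ζ t, t) = U (y, t) := by rw [hζt]
  have hinv : HasDerivAt (fun τ => (U (ζ τ, τ))⁻¹)
      (-(fderiv ℝ U (y, t) (zp, 1)) / U (y, t) ^ 2) t := by
    have := hUcurve.inv (by rw [hζt]; exact h1)
    rwa [hUζt] at this
  have hD : deriv (fun τ => Ψ (xs y t) τ) t
      = -(zp * fderiv ℝ U (y, t) (1, 0) + fderiv ℝ U (y, t) (0, 1)) / U (y, t) ^ 2 := by
    have h := (hinv.congr_of_eventuallyEq hΨev).deriv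
    rw [h]
    congr 1
    rw [stmt16_clm_eval (fderiv ℝ U (y, t)) (zp, 1)]
    ring
  -- final assembly
  have hA' : Vt (y, t) = fderiv ℝ U (y, t) (1, 0) - 2 * δ * (xs y t * U (y, t)) := by
    rw [← hW_rfl]; exact hburg' y t hyt
  rw [hD]
  set a1 : ℝ := U (y, t) with ha1
  set a2 : ℝ := fderiv ℝ U (y, t) (1, 0) with ha2
  set a3 : ℝ := fderiv ℝ U (y, t) (0, 1) with ha3
  set a4 : ℝ := Vt (y, t) with ha4
  set a5 : ℝ := fderiv ℝ W (y, t) (1, 0) with ha5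
  set x0 : ℝ := xs y t with hx0
  set dg : ℝ := deriv (fun x : ℝ => deriv (fun x' : ℝ => Ψ x' t) x / (Ψ x t) ^ 2) x0
    with hdg
  -- hypotheses: h1 : a1 ≠ 0, hA' : a4 = a2 - 2δ(x0 a1), hB : a3 = a5 - 2δ(a1 a1 + x0 a2),
  -- hC : dg * a1 = (-a5 * a1 - -a2 * a2)/a1^2, hE : zp * a1 + a4 = 0
  have hzp' : zp = -a4 / a1 := by
    field_simp at hE ⊢
    linarith
  rw [hzp', hA', hB]
  have hC' : dg = (a2 * a2 - a5 * a1) / a1 ^ 3 := by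
    field_simp at hC ⊢
    linear_combination hC
  rw [hC']
  field_simp
  ring
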